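/- Suppose S ⊆ V is a union of connected components of G, i.e., whenever u ∈ S and v is reachable from u in G, then v ∈ S. Let x, y : V → ℝ have support contained in S, and let u : ℝ → (V → ℝ) be a twice differentiable function satisfying the wave equation u″(t) = −L u(t) for all t, with u(0) = x and u′(0) = y. Then for every t ∈ ℝ and every vertex v ∉ S, u(t)(v) = 0. -/

import Mathlib

open Set

/-- if `S` is a union of connected components of `G`, the initial data
`x`, `y` are supported in `S`, and `u` is a twice differentiable solution of the wave
equation `u''(t) = -L u(t)` with `u(0) = x`, `u'(0) = y`, then `u(t)` vanishes outside
of `S` for all `t`, where `L = D - A` is the graph Laplacian. -/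
theorem wave_solution_supported_on_connected_components
    (V : Type*) [Fintype V] [DecidableEq V]
    (G : SimpleGraph V) [DecidableRel G.Adj]
    (L : Matrix V V ℝ) (hLdef : L = G.degMatrix ℝ - G.adjMatrix ℝ)
    (S : Set V) (hS : ∀ u ∈ S, ∀ v : V, G.Reachable u v → v ∈ S)
    (x y : V → ℝ) (hx : ∀ v : V, v ∉ S → x v = 0) (hy : ∀ v : V, v ∉ S → y v = 0)
    (u u' : ℝ → V → ℝ)
    (hu' : ∀ t : ℝ, HasDerivAt u (u' t) t)
    (hu'' : ∀ t : ℝ, HasDerivAt u' (-(L.mulVec (u t))) t)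
    (hu0 : u 0 = x) (hu'0 : u' 0 = y) :
    ∀ t : ℝ, ∀ v : V, v ∉ S → u t v = 0 := by
  classical
  -- the projection onto functions supported in S
  set P : (V → ℝ) → (V → ℝ) := fun z v => if v ∈ S then z v else 0 with hP
  -- entries of L vanish across the boundary of S
  have hL0 : ∀ v w : V, (v ∈ S) ≠ (w ∈ S) → L v w = 0 := by
    intro v w hvw
    have hadj : ¬ G.Adj v w := by
      intro h
      rcases Classical.em (v ∈ S) with hv | hv
      · exact hvw (by simp [hv, hS v hv w h.reachable])
      · have hw : w ∉ S := fun hw => hv (hS w hw v h.symm.reachable)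
        exact hvw (by simp [hv, hw])
    have hne : v ≠ w := by
      rintro rfl; exact hvw rfl
    simp [hLdef, SimpleGraph.degMatrix, SimpleGraph.adjMatrix, Matrix.sub_apply,
      Matrix.diagonal_apply_ne _ hne, hadj]
  -- L commutes with P
  have hLP : ∀ z : V → ℝ, L.mulVec (P z) = P (L.mulVec z) := by
    intro z
    funext v
    rcases Classical.em (v ∈ S) with hv | hv
    · simp only [hP, Matrix.mulVec, dotProduct, hv, if_pos]
      refine Finset.sum_congr rfl fun w _ => ?_
      rcases Classical.em (w ∈ S) with hw | hw
      · simp [hw]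
      · have : L v w = 0 := hL0 v w (by simp [hv, hw])
        simp [this, hw]
    · simp only [hP, Matrix.mulVec, dotProduct, hv, if_neg, if_false]
      refine Finset.sum_eq_zero fun w _ => ?_
      rcases Classical.em (w ∈ S) with hw | hw
      · have : L v w = 0 := hL0 v w (by simp [hv, hw])
        simp [this]
      · simp [hw]
  -- P as a continuous linear map
  let Pl : (V → ℝ) →L[ℝ] (V → ℝ) :=
    LinearMap.toContinuousLinearMap
      { toFun := P
        map_add' := by intro a b; funext v; by_cases h : v ∈ S <;> simp [hP, h]
        map_smul' := by intro c a; funext v; by_cases h : v ∈ S <;> simp [hP, h] }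
  -- the first-order vector field
  let F : ((V → ℝ) × (V → ℝ)) →L[ℝ] ((V → ℝ) × (V → ℝ)) :=
    (ContinuousLinearMap.snd ℝ (V → ℝ) (V → ℝ)).prod
      ((-(LinearMap.toContinuousLinearMap (Matrix.mulVecLin L))).comp
        (ContinuousLinearMap.fst ℝ (V → ℝ) (V → ℝ)))
  have hF : ∀ a b : V → ℝ, F (a, b) = (b, -(L.mulVec a)) := by
    intro a b; rfl
  -- two solutions of the first order ODE
  set f : ℝ → (V → ℝ) × (V → ℝ) := fun t => (u t, u' t) with hf
  set g : ℝ → (V → ℝ) × (V → ℝ) := fun t => (Pl (u t), Pl (u' t)) with hg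
  have hf' : ∀ t : ℝ, HasDerivAt f (F (f t)) t := by
    intro t
    rw [hF]
    exact (hu' t).prodMk (hu'' t)
  have hg' : ∀ t : ℝ, HasDerivAt g (F (g t)) t := by
    intro t
    have h1 : HasDerivAt (fun s => Pl (u s)) (Pl (u' t)) t :=
      Pl.hasFDerivAt.comp_hasDerivAt t (hu' t)
    have h2 : HasDerivAt (fun s => Pl (u' s)) (Pl (-(L.mulVec (u t)))) t :=
      Pl.hasFDerivAt.comp_hasDerivAt t (hu'' t)
    have hkey : Pl (-(L.mulVec (u t))) = -(L.mulVec (Pl (u t))) := by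
      show P (-(L.mulVec (u t))) = -(L.mulVec (P (u t)))
      rw [hLP]
      funext v; by_cases h : v ∈ S <;> simp [hP, h]
    rw [hF]
    exact h1.prodMk (hkey ▸ h2)
  have heq0 : f 0 = g 0 := by
    have hx' : Pl x = x := by
      funext v
      show P x v = x v
      by_cases h : v ∈ S <;> simp [hP, h, hx v]
    have hy' : Pl y = y := by
      funext v
      show P y v = y v
      by_cases h : v ∈ S <;> simp [hP, h, hy v]
    simp [hf, hg, hu0, hu'0, hx', hy']
  -- uniqueness of ODE solutions gives f = g
  have huniq : ∀ t : ℝ, f t = g t := by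
    intro t
    have hmem : t ∈ Ioo (-(|t| + 1)) (|t| + 1) := by
      constructor
      · nlinarith [abs_nonneg t, neg_abs_le t]
      · nlinarith [abs_nonneg t, le_abs_self t]
    have h0 : (0 : ℝ) ∈ Ioo (-(|t| + 1)) (|t| + 1) := by
      constructor
      · nlinarith [abs_nonneg t]
      · nlinarith [abs_nonneg t]
    have := ODE_solution_unique_of_mem_Ioo
      (v := fun _ z => F z) (s := fun _ => univ)
      (fun _ _ => F.lipschitz.lipschitzOnWith) h0
      (fun s _ => ⟨hf' s, trivial⟩) (fun s _ => ⟨hg' s, trivial⟩) heq0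
    exact this hmem
  intro t v hv
  have h1 : u t = Pl (u t) := congrArg Prod.fst (huniq t)
  have h2 : Pl (u t) v = 0 := by
    show P (u t) v = 0
    simp [hP, hv]
  rw [h1]; exact h2
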